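/- If S is a Shannon triangle of type (2,2,2), then the odd chromatic index of S equals 6; if S is a Shannon triangle of type (2,2,1), then the odd chromatic index of S equals 5. -/

import Mathlib

/-- The bouquet of parallel edges between `u` and `w`. -/
def bouquet {V E : Type*} (ends : E → Sym2 V) (u w : V) : Set E :=
  {e | ends e = s(u, w)}

/-- A Shannon triangle of type (2,2,2): three pairwise adjacent vertices, each bouquet
of positive even size. -/
def IsShannon222 {V E : Type*} [Fintype V] (ends : E → Sym2 V) : Prop :=
  Fintype.card V = 3 ∧ ∀ u w : V, u ≠ w →
    0 < (bouquet ends u w).ncard ∧ Even (bouquet ends u w).ncard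

/-- A Shannon triangle of type (2,2,1): three pairwise adjacent vertices, two bouquets
of positive even size and one of odd size. -/
def IsShannon221 {V E : Type*} [Fintype V] (ends : E → Sym2 V) : Prop :=
  Fintype.card V = 3 ∧ ∃ a b c : V, a ≠ b ∧ a ≠ c ∧ b ≠ c ∧
    0 < (bouquet ends a b).ncard ∧ Even (bouquet ends a b).ncard ∧
    0 < (bouquet ends a c).ncard ∧ Even (bouquet ends a c).ncard ∧
    Odd (bouquet ends b c).ncard

/-- A multigraph admits an odd `k`-edge-coloring. -/
def OddColorable {V E : Type*} [Fintype E] (ends : E → Sym2 V) (k : ℕ) : Prop :=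
  ∃ φ : E → Fin k, ∀ (u : V) (j : Fin k),
    {e | φ e = j ∧ u ∈ ends e}.ncard = 0 ∨ Odd {e | φ e = j ∧ u ∈ ends e}.ncard

open Finset in
open scoped Classical in
lemma my_ncard_eq {E : Type*} [Fintype E] (p : E → Prop) :
    {e | p e}.ncard = (Finset.univ.filter p).card := by
  rw [Set.ncard_eq_toFinset_card', Set.toFinset_setOf]

lemma my_classify {V E : Type*} [Fintype V] (ends : E → Sym2 V)
    (hloopless : ∀ e, ¬ (ends e).IsDiag)
    (hcard : Fintype.card V = 3) (a b c : V)
    (hab : a ≠ b) (hac : a ≠ c) (hbc : b ≠ c) :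
    ∀ e, ends e = s(a, b) ∨ ends e = s(a, c) ∨ ends e = s(b, c) := by
  classical
  have huniv : ∀ v : V, v = a ∨ v = b ∨ v = c := by
    intro v
    have h3 : ({a, b, c} : Finset V).card = 3 :=
      Finset.card_eq_three.2 ⟨a, b, c, hab, hac, hbc, rfl⟩
    have := Finset.eq_univ_of_card ({a, b, c} : Finset V) (by rw [h3, hcard])
    have hv : v ∈ ({a, b, c} : Finset V) := this ▸ Finset.mem_univ v
    simpa using hv
  intro e
  have hd := hloopless e
  obtain ⟨x, y, h⟩ : ∃ x y, ends e = s(x, y) := by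
    induction (ends e) using Sym2.ind with
    | _ x y => exact ⟨x, y, rfl⟩
  rw [h] at hd ⊢
  rw [Sym2.mk_isDiag_iff] at hd
  rcases huniv x with rfl | rfl | rfl <;> rcases huniv y with rfl | rfl | rfl <;>
    simp_all [Sym2.eq_iff] <;> tauto

open Finset in
open scoped Classical in
lemma my_lower {V E : Type*} [Fintype V] [Fintype E] (ends : E → Sym2 V)
    (a b c : V) (hab : a ≠ b) (hac : a ≠ c) (hbc : b ≠ c)
    (hclass : ∀ e, ends e = s(a, b) ∨ ends e = s(a, c) ∨ ends e = s(b, c))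
    {k : ℕ} (h : OddColorable ends k) :
    ∃ m1 m2 m3 : ℕ, m1 + m2 + m3 ≤ k ∧
      m1 % 2 = (bouquet ends a b).ncard % 2 ∧ ((bouquet ends a b).ncard ≠ 0 → m1 ≠ 0) ∧
      m2 % 2 = (bouquet ends a c).ncard % 2 ∧ ((bouquet ends a c).ncard ≠ 0 → m2 ≠ 0) ∧
      m3 % 2 = (bouquet ends b c).ncard % 2 ∧ ((bouquet ends b c).ncard ≠ 0 → m3 ≠ 0) := by
  obtain ⟨φ, hφ⟩ := h
  -- pairwise distinct Sym2 values
  have d12 : s(a, b) ≠ s(a, c) := by simp [Sym2.eq_iff]; tauto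
  have d13 : s(a, b) ≠ s(b, c) := by simp [Sym2.eq_iff]; tauto
  have d23 : s(a, c) ≠ s(b, c) := by simp [Sym2.eq_iff]; tauto
  set n1 : Fin k → ℕ := fun j => (univ.filter fun e => ends e = s(a, b) ∧ φ e = j).card with hn1
  set n2 : Fin k → ℕ := fun j => (univ.filter fun e => ends e = s(a, c) ∧ φ e = j).card with hn2
  set n3 : Fin k → ℕ := fun j => (univ.filter fun e => ends e = s(b, c) ∧ φ e = j).card with hn3
  -- decomposition of the colored star at each vertex
  have decomp : ∀ (u : V) (p q : Sym2 V), p ≠ q →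
      (∀ e, u ∈ ends e ↔ (ends e = p ∨ ends e = q)) → ∀ j : Fin k,
      {e | φ e = j ∧ u ∈ ends e}.ncard
        = (univ.filter fun e => ends e = p ∧ φ e = j).card
          + (univ.filter fun e => ends e = q ∧ φ e = j).card := by
    intro u p q hpq hmem j
    rw [my_ncard_eq]
    rw [← Finset.card_union_of_disjoint (by
      rw [Finset.disjoint_filter]
      rintro e _ ⟨hp, -⟩ ⟨hq, -⟩
      exact hpq (hp ▸ hq))]
    congr 1
    rw [← Finset.filter_or]
    ext e
    simp only [Finset.mem_filter, Finset.mem_univ, true_and]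
    rw [hmem e]
    tauto
  have mema : ∀ e, a ∈ ends e ↔ (ends e = s(a, b) ∨ ends e = s(a, c)) := by
    intro e
    constructor
    · intro hu
      rcases hclass e with h | h | h
      · exact Or.inl h
      · exact Or.inr h
      · rw [h, Sym2.mem_iff] at hu; tauto
    · rintro (h | h) <;> rw [h, Sym2.mem_iff] <;> tauto
  have memb : ∀ e, b ∈ ends e ↔ (ends e = s(a, b) ∨ ends e = s(b, c)) := by
    intro e
    constructor
    · intro hu
      rcases hclass e with h | h | h
      · exact Or.inl h
      · rw [h, Sym2.mem_iff] at hu; tauto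
      · exact Or.inr h
    · rintro (h | h) <;> rw [h, Sym2.mem_iff] <;> tauto
  have memc : ∀ e, c ∈ ends e ↔ (ends e = s(a, c) ∨ ends e = s(b, c)) := by
    intro e
    constructor
    · intro hu
      rcases hclass e with h | h | h
      · rw [h, Sym2.mem_iff] at hu; tauto
      · exact Or.inl h
      · exact Or.inr h
    · rintro (h | h) <;> rw [h, Sym2.mem_iff] <;> tauto
  -- parity facts per color
  have parity : ∀ j : Fin k,
      (n1 j + n2 j = 0 ∨ (n1 j + n2 j) % 2 = 1) ∧
      (n1 j + n3 j = 0 ∨ (n1 j + n3 j) % 2 = 1) ∧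
      (n2 j + n3 j = 0 ∨ (n2 j + n3 j) % 2 = 1) := by
    intro j
    refine ⟨?_, ?_, ?_⟩
    · have := hφ a j
      rw [decomp a _ _ d12 mema j] at this
      rcases this with h | h
      · exact Or.inl h
      · exact Or.inr (Nat.odd_iff.mp h)
    · have := hφ b j
      rw [decomp b _ _ d13 memb j] at this
      rcases this with h | h
      · exact Or.inl h
      · exact Or.inr (Nat.odd_iff.mp h)
    · have := hφ c j
      rw [decomp c _ _ d23 memc j] at this
      rcases this with h | h
      · exact Or.inl h
      · exact Or.inr (Nat.odd_iff.mp h)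
  -- at most one fiber per color is nonzero, and it has odd size
  have atmost : ∀ j : Fin k,
      (n1 j ≠ 0 → n1 j % 2 = 1 ∧ n2 j = 0 ∧ n3 j = 0) ∧
      (n2 j ≠ 0 → n2 j % 2 = 1 ∧ n1 j = 0 ∧ n3 j = 0) ∧
      (n3 j ≠ 0 → n3 j % 2 = 1 ∧ n1 j = 0 ∧ n2 j = 0) := by
    intro j
    obtain ⟨p1, p2, p3⟩ := parity j
    omega
  -- bouquet sizes as sums over colors
  have sum1 : (bouquet ends a b).ncard = ∑ j : Fin k, n1 j := by
    rw [show bouquet ends a b = {e | ends e = s(a, b)} from rfl, my_ncard_eq]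
    rw [Finset.card_eq_sum_card_fiberwise (f := φ) (t := univ) (fun e _ => Finset.mem_univ _)]
    refine Finset.sum_congr rfl fun j _ => ?_
    rw [Finset.filter_filter]
    congr
  have sum2 : (bouquet ends a c).ncard = ∑ j : Fin k, n2 j := by
    rw [show bouquet ends a c = {e | ends e = s(a, c)} from rfl, my_ncard_eq]
    rw [Finset.card_eq_sum_card_fiberwise (f := φ) (t := univ) (fun e _ => Finset.mem_univ _)]
    refine Finset.sum_congr rfl fun j _ => ?_
    rw [Finset.filter_filter]
    congr
  have sum3 : (bouquet ends b c).ncard = ∑ j : Fin k, n3 j := by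
    rw [show bouquet ends b c = {e | ends e = s(b, c)} from rfl, my_ncard_eq]
    rw [Finset.card_eq_sum_card_fiberwise (f := φ) (t := univ) (fun e _ => Finset.mem_univ _)]
    refine Finset.sum_congr rfl fun j _ => ?_
    rw [Finset.filter_filter]
    congr
  -- used color sets
  set S1 : Finset (Fin k) := univ.filter fun j => n1 j ≠ 0 with hS1
  set S2 : Finset (Fin k) := univ.filter fun j => n2 j ≠ 0 with hS2
  set S3 : Finset (Fin k) := univ.filter fun j => n3 j ≠ 0 with hS3
  have key : ∀ (n : Fin k → ℕ) (S : Finset (Fin k)), S = univ.filter (fun j => n j ≠ 0) →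
      (∀ j, n j ≠ 0 → n j % 2 = 1) →
      (∑ j : Fin k, n j) % 2 = S.card % 2 ∧ ((∑ j : Fin k, n j) ≠ 0 → S.card ≠ 0) := by
    intro n S hS hodd
    have hsum : ∑ j : Fin k, n j = ∑ j ∈ S, n j := by
      rw [hS, Finset.sum_filter_ne_zero]
    constructor
    · rw [hsum, Finset.sum_nat_mod]
      have : ∑ j ∈ S, n j % 2 = ∑ j ∈ S, 1 := by
        refine Finset.sum_congr rfl fun j hj => ?_
        rw [hS, Finset.mem_filter] at hj
        exact hodd j hj.2
      rw [this, Finset.sum_const, smul_eq_mul, mul_one]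
    · intro hne hc
      rw [Finset.card_eq_zero] at hc
      rw [hsum, hc, Finset.sum_empty] at hne
      exact hne rfl
  obtain ⟨k1, k1pos⟩ := key n1 S1 hS1 (fun j hj => ((atmost j).1 hj).1)
  obtain ⟨k2, k2pos⟩ := key n2 S2 hS2 (fun j hj => ((atmost j).2.1 hj).1)
  obtain ⟨k3, k3pos⟩ := key n3 S3 hS3 (fun j hj => ((atmost j).2.2 hj).1)
  -- disjointness
  have dis12 : Disjoint S1 S2 := by
    rw [Finset.disjoint_filter]
    intro j _ h1 h2
    exact h2 ((atmost j).1 h1).2.1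
  have dis13 : Disjoint S1 S3 := by
    rw [Finset.disjoint_filter]
    intro j _ h1 h3
    exact h3 ((atmost j).1 h1).2.2
  have dis23 : Disjoint S2 S3 := by
    rw [Finset.disjoint_filter]
    intro j _ h2 h3
    exact h3 ((atmost j).2.1 h2).2.2
  refine ⟨S1.card, S2.card, S3.card, ?_, ?_, ?_, ?_, ?_, ?_, ?_⟩
  · have := Finset.card_le_univ (S1 ∪ S2 ∪ S3)
    rw [Finset.card_union_of_disjoint (by
        rw [Finset.disjoint_union_left]; exact ⟨dis13, dis23⟩),
      Finset.card_union_of_disjoint dis12] at this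
    simpa using this
  · rw [sum1]; exact k1.symm
  · rw [sum1]; exact k1pos
  · rw [sum2]; exact k2.symm
  · rw [sum2]; exact k2pos
  · rw [sum3]; exact k3.symm
  · rw [sum3]; exact k3pos

lemma my_ub {V E : Type*} [Fintype E] (ends : E → Sym2 V) {k : ℕ} (φ : E → Fin k)
    (h : ∀ j : Fin k, ∃ p : Sym2 V, (∀ e, φ e = j → ends e = p) ∧
      ({e | φ e = j} = ∅ ∨ Odd {e | φ e = j}.ncard)) :
    OddColorable ends k := by
  refine ⟨φ, fun u j => ?_⟩
  obtain ⟨p, hp, hcard⟩ := h j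
  by_cases hu : u ∈ p
  · have he : {e | φ e = j ∧ u ∈ ends e} = {e | φ e = j} := by
      ext e
      simp only [Set.mem_setOf_eq, and_iff_left_iff_imp]
      intro hej
      rw [hp e hej]
      exact hu
    rw [he]
    rcases hcard with h0 | h1
    · left; rw [h0]; simp
    · right; exact h1
  · left
    have he : {e | φ e = j ∧ u ∈ ends e} = ∅ := by
      ext e
      simp only [Set.mem_setOf_eq, Set.mem_empty_iff_false, iff_false, not_and]
      intro hej hue
      rw [hp e hej] at hue
      exact hu hue
    rw [he]
    simp

lemma my_split {E : Type*} [Fintype E] (B : Set E) (e0 : E) (h0 : e0 ∈ B)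
    (hpos : 0 < B.ncard) (heven : Even B.ncard) :
    Odd (B \ {e0} : Set E).ncard ∧ Odd ({e0} : Set E).ncard := by
  constructor
  · rw [Set.ncard_diff_singleton_of_mem h0]
    exact Nat.Even.sub_odd hpos heven odd_one
  · rw [Set.ncard_singleton]
    exact odd_one

lemma my_ub222 {V E : Type*} [Fintype V] [Fintype E] (ends : E → Sym2 V)
    (a b c : V) (hab : a ≠ b) (hac : a ≠ c) (hbc : b ≠ c)
    (hclass : ∀ e, ends e = s(a, b) ∨ ends e = s(a, c) ∨ ends e = s(b, c))
    (h1 : 0 < (bouquet ends a b).ncard) (h1e : Even (bouquet ends a b).ncard)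
    (h2 : 0 < (bouquet ends a c).ncard) (h2e : Even (bouquet ends a c).ncard)
    (h3 : 0 < (bouquet ends b c).ncard) (h3e : Even (bouquet ends b c).ncard) :
    OddColorable ends 6 := by
  classical
  obtain ⟨e1, he1⟩ := Set.nonempty_of_ncard_ne_zero h1.ne'
  obtain ⟨e2, he2⟩ := Set.nonempty_of_ncard_ne_zero h2.ne'
  obtain ⟨e3, he3⟩ := Set.nonempty_of_ncard_ne_zero h3.ne'
  have he1' : ends e1 = s(a, b) := he1
  have he2' : ends e2 = s(a, c) := he2
  have he3' : ends e3 = s(b, c) := he3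
  have d12 : s(a, b) ≠ s(a, c) := by simp [Sym2.eq_iff]; tauto
  have d13 : s(a, b) ≠ s(b, c) := by simp [Sym2.eq_iff]; tauto
  have d23 : s(a, c) ≠ s(b, c) := by simp [Sym2.eq_iff]; tauto
  set φ : E → Fin 6 := fun e =>
    if ends e = s(a, b) then (if e = e1 then 0 else 1)
    else if ends e = s(a, c) then (if e = e2 then 2 else 3)
    else if e = e3 then 4 else 5 with hφ
  have d21 : s(a, c) ≠ s(a, b) := d12.symm
  have d31 : s(b, c) ≠ s(a, b) := d13.symm
  have d32 : s(b, c) ≠ s(a, c) := d23.symm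
  have hc : ∀ e, (φ e = 0 ↔ (ends e = s(a, b) ∧ e = e1)) ∧
      (φ e = 1 ↔ (ends e = s(a, b) ∧ e ≠ e1)) ∧
      (φ e = 2 ↔ (ends e = s(a, c) ∧ e = e2)) ∧
      (φ e = 3 ↔ (ends e = s(a, c) ∧ e ≠ e2)) ∧
      (φ e = 4 ↔ (ends e = s(b, c) ∧ e = e3)) ∧
      (φ e = 5 ↔ (ends e = s(b, c) ∧ e ≠ e3)) := by
    intro e
    rw [hφ]
    rcases hclass e with g | g | g <;>
      by_cases g3 : e = e1 <;> by_cases g4 : e = e2 <;> by_cases g5 : e = e3 <;>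
      simp_all <;> decide
  apply my_ub ends φ
  intro j
  have hset : ∀ (p : E → Prop) (J : Fin 6), (∀ e, φ e = J ↔ p e) →
      {e | φ e = J} = {e | p e} := by
    intro p J h
    ext e
    exact h e
  fin_cases j
  · refine ⟨s(a, b), fun e he => ((hc e).1.mp he).1, Or.inr ?_⟩
    show Odd {e | φ e = 0}.ncard
    rw [hset _ 0 (fun e => (hc e).1)]
    have : {e | ends e = s(a, b) ∧ e = e1} = {e1} := by
      ext e
      simp only [Set.mem_setOf_eq, Set.mem_singleton_iff, and_iff_right_iff_imp]
      rintro rfl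
      exact he1'
    rw [this, Set.ncard_singleton]
    exact odd_one
  · refine ⟨s(a, b), fun e he => ((hc e).2.1.mp he).1, Or.inr ?_⟩
    show Odd {e | φ e = 1}.ncard
    rw [hset _ 1 (fun e => (hc e).2.1)]
    have : {e | ends e = s(a, b) ∧ e ≠ e1} = bouquet ends a b \ {e1} := by
      ext e
      simp [bouquet, Set.mem_diff]
    rw [this]
    exact (my_split _ e1 he1 h1 h1e).1
  · refine ⟨s(a, c), fun e he => ((hc e).2.2.1.mp he).1, Or.inr ?_⟩
    show Odd {e | φ e = 2}.ncard
    rw [hset _ 2 (fun e => (hc e).2.2.1)]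
    have : {e | ends e = s(a, c) ∧ e = e2} = {e2} := by
      ext e
      simp only [Set.mem_setOf_eq, Set.mem_singleton_iff, and_iff_right_iff_imp]
      rintro rfl
      exact he2'
    rw [this, Set.ncard_singleton]
    exact odd_one
  · refine ⟨s(a, c), fun e he => ((hc e).2.2.2.1.mp he).1, Or.inr ?_⟩
    show Odd {e | φ e = 3}.ncard
    rw [hset _ 3 (fun e => (hc e).2.2.2.1)]
    have : {e | ends e = s(a, c) ∧ e ≠ e2} = bouquet ends a c \ {e2} := by
      ext e
      simp [bouquet, Set.mem_diff]
    rw [this]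
    exact (my_split _ e2 he2 h2 h2e).1
  · refine ⟨s(b, c), fun e he => ((hc e).2.2.2.2.1.mp he).1, Or.inr ?_⟩
    show Odd {e | φ e = 4}.ncard
    rw [hset _ 4 (fun e => (hc e).2.2.2.2.1)]
    have : {e | ends e = s(b, c) ∧ e = e3} = {e3} := by
      ext e
      simp only [Set.mem_setOf_eq, Set.mem_singleton_iff, and_iff_right_iff_imp]
      rintro rfl
      exact he3'
    rw [this, Set.ncard_singleton]
    exact odd_one
  · refine ⟨s(b, c), fun e he => ((hc e).2.2.2.2.2.mp he).1, Or.inr ?_⟩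
    show Odd {e | φ e = 5}.ncard
    rw [hset _ 5 (fun e => (hc e).2.2.2.2.2)]
    have : {e | ends e = s(b, c) ∧ e ≠ e3} = bouquet ends b c \ {e3} := by
      ext e
      simp [bouquet, Set.mem_diff]
    rw [this]
    exact (my_split _ e3 he3 h3 h3e).1

lemma my_ub221 {V E : Type*} [Fintype V] [Fintype E] (ends : E → Sym2 V)
    (a b c : V) (hab : a ≠ b) (hac : a ≠ c) (hbc : b ≠ c)
    (hclass : ∀ e, ends e = s(a, b) ∨ ends e = s(a, c) ∨ ends e = s(b, c))
    (h1 : 0 < (bouquet ends a b).ncard) (h1e : Even (bouquet ends a b).ncard)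
    (h2 : 0 < (bouquet ends a c).ncard) (h2e : Even (bouquet ends a c).ncard)
    (h3o : Odd (bouquet ends b c).ncard) :
    OddColorable ends 5 := by
  classical
  obtain ⟨e1, he1⟩ := Set.nonempty_of_ncard_ne_zero h1.ne'
  obtain ⟨e2, he2⟩ := Set.nonempty_of_ncard_ne_zero h2.ne'
  have he1' : ends e1 = s(a, b) := he1
  have he2' : ends e2 = s(a, c) := he2
  have d12 : s(a, b) ≠ s(a, c) := by simp [Sym2.eq_iff]; tauto
  have d13 : s(a, b) ≠ s(b, c) := by simp [Sym2.eq_iff]; tauto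
  have d23 : s(a, c) ≠ s(b, c) := by simp [Sym2.eq_iff]; tauto
  have d21 : s(a, c) ≠ s(a, b) := d12.symm
  have d31 : s(b, c) ≠ s(a, b) := d13.symm
  have d32 : s(b, c) ≠ s(a, c) := d23.symm
  set φ : E → Fin 5 := fun e =>
    if ends e = s(a, b) then (if e = e1 then 0 else 1)
    else if ends e = s(a, c) then (if e = e2 then 2 else 3)
    else 4 with hφ
  have hc : ∀ e, (φ e = 0 ↔ (ends e = s(a, b) ∧ e = e1)) ∧
      (φ e = 1 ↔ (ends e = s(a, b) ∧ e ≠ e1)) ∧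
      (φ e = 2 ↔ (ends e = s(a, c) ∧ e = e2)) ∧
      (φ e = 3 ↔ (ends e = s(a, c) ∧ e ≠ e2)) ∧
      (φ e = 4 ↔ ends e = s(b, c)) := by
    intro e
    rw [hφ]
    rcases hclass e with g | g | g <;>
      by_cases g3 : e = e1 <;> by_cases g4 : e = e2 <;>
      simp_all <;> decide
  apply my_ub ends φ
  intro j
  have hset : ∀ (p : E → Prop) (J : Fin 5), (∀ e, φ e = J ↔ p e) →
      {e | φ e = J} = {e | p e} := by
    intro p J h
    ext e
    exact h e
  fin_cases j
  · refine ⟨s(a, b), fun e he => ((hc e).1.mp he).1, Or.inr ?_⟩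
    show Odd {e | φ e = 0}.ncard
    rw [hset _ 0 (fun e => (hc e).1)]
    have : {e | ends e = s(a, b) ∧ e = e1} = {e1} := by
      ext e
      simp only [Set.mem_setOf_eq, Set.mem_singleton_iff, and_iff_right_iff_imp]
      rintro rfl
      exact he1'
    rw [this, Set.ncard_singleton]
    exact odd_one
  · refine ⟨s(a, b), fun e he => ((hc e).2.1.mp he).1, Or.inr ?_⟩
    show Odd {e | φ e = 1}.ncard
    rw [hset _ 1 (fun e => (hc e).2.1)]
    have : {e | ends e = s(a, b) ∧ e ≠ e1} = bouquet ends a b \ {e1} := by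
      ext e
      simp [bouquet, Set.mem_diff]
    rw [this]
    exact (my_split _ e1 he1 h1 h1e).1
  · refine ⟨s(a, c), fun e he => ((hc e).2.2.1.mp he).1, Or.inr ?_⟩
    show Odd {e | φ e = 2}.ncard
    rw [hset _ 2 (fun e => (hc e).2.2.1)]
    have : {e | ends e = s(a, c) ∧ e = e2} = {e2} := by
      ext e
      simp only [Set.mem_setOf_eq, Set.mem_singleton_iff, and_iff_right_iff_imp]
      rintro rfl
      exact he2'
    rw [this, Set.ncard_singleton]
    exact odd_one
  · refine ⟨s(a, c), fun e he => ((hc e).2.2.2.1.mp he).1, Or.inr ?_⟩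
    show Odd {e | φ e = 3}.ncard
    rw [hset _ 3 (fun e => (hc e).2.2.2.1)]
    have : {e | ends e = s(a, c) ∧ e ≠ e2} = bouquet ends a c \ {e2} := by
      ext e
      simp [bouquet, Set.mem_diff]
    rw [this]
    exact (my_split _ e2 he2 h2 h2e).1
  · refine ⟨s(b, c), fun e he => ((hc e).2.2.2.2.mp he), Or.inr ?_⟩
    show Odd {e | φ e = 4}.ncard
    rw [hset _ 4 (fun e => (hc e).2.2.2.2)]
    exact h3o

/-- If `S` is a Shannon triangle of type (2,2,2), its odd chromatic index equals 6;
if `S` is a Shannon triangle of type (2,2,1), its odd chromatic index equals 5. -/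
theorem stmt_18 {V E : Type*} [Fintype V] [Fintype E]
    (ends : E → Sym2 V)
    (hloopless : ∀ e, ¬ (ends e).IsDiag) :
    (IsShannon222 ends →
      OddColorable ends 6 ∧ ¬ OddColorable ends 5) ∧
    (IsShannon221 ends →
      OddColorable ends 5 ∧ ¬ OddColorable ends 4) := by
  classical
  constructor
  · rintro ⟨hcard, hB⟩
    obtain ⟨a, b, c, hab, hac, hbc, -⟩ :=
      Finset.card_eq_three.mp (by rw [Finset.card_univ]; exact hcard :
        (Finset.univ : Finset V).card = 3)
    have hclass := my_classify ends hloopless hcard a b c hab hac hbc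
    obtain ⟨h1, h1e⟩ := hB a b hab
    obtain ⟨h2, h2e⟩ := hB a c hac
    obtain ⟨h3, h3e⟩ := hB b c hbc
    refine ⟨my_ub222 ends a b c hab hac hbc hclass h1 h1e h2 h2e h3 h3e, ?_⟩
    intro hcol
    obtain ⟨m1, m2, m3, hle, p1, q1, p2, q2, p3, q3⟩ :=
      my_lower ends a b c hab hac hbc hclass hcol
    rw [Nat.even_iff] at h1e h2e h3e
    have := q1 h1.ne'
    have := q2 h2.ne'
    have := q3 h3.ne'
    omega
  · rintro ⟨hcard, a, b, c, hab, hac, hbc, h1, h1e, h2, h2e, h3o⟩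
    have hclass := my_classify ends hloopless hcard a b c hab hac hbc
    refine ⟨my_ub221 ends a b c hab hac hbc hclass h1 h1e h2 h2e h3o, ?_⟩
    intro hcol
    obtain ⟨m1, m2, m3, hle, p1, q1, p2, q2, p3, q3⟩ :=
      my_lower ends a b c hab hac hbc hclass hcol
    rw [Nat.even_iff] at h1e h2e
    rw [Nat.odd_iff] at h3o
    have := q1 h1.ne'
    have := q2 h2.ne'
    omega
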